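/- Let m ≥ 3 and let λ_1,…,λ_m ∈ ℤ² be such that each λ_i is primitive and det(λ_i,λ_{i+1}) ≠ 0 for i = 1,…,m (indices mod m). If κ_1,…,κ_{m−2} is a ℤ-basis of the submodule K ⊆ ℤ^m, then the m vectors a, b, φ(κ_1),…,φ(κ_{m−2}) form a ℤ-basis of the submodule L_1 ∩ ⋯ ∩ L_m of ℤ^m. -/

import Mathlib

namespace ToricStmt

/-- Cyclic successor on `Fin m` (indices mod `m`). -/
def fsucc {m : ℕ} (i : Fin m) : Fin m := ⟨(i.val + 1) % m, Nat.mod_lt _ i.pos⟩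

/-- The submodule `K` of linear relations among the `λ_i = (a_i, b_i)`. -/
def Kmod (m : ℕ) (a b : Fin m → ℤ) : Submodule ℤ (Fin m → ℤ) where
  carrier := {t | ∑ i, t i * a i = 0 ∧ ∑ i, t i * b i = 0}
  add_mem' := by
    intro x y hx hy
    obtain ⟨hx1, hx2⟩ := hx
    obtain ⟨hy1, hy2⟩ := hy
    constructor
    · simp only [Pi.add_apply, add_mul]
      rw [Finset.sum_add_distrib, hx1, hy1, add_zero]
    · simp only [Pi.add_apply, add_mul]
      rw [Finset.sum_add_distrib, hx2, hy2, add_zero]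
  zero_mem' := by constructor <;> simp
  smul_mem' := by
    intro c x hx
    obtain ⟨hx1, hx2⟩ := hx
    constructor
    · simp only [Pi.smul_apply, smul_eq_mul, mul_assoc]
      rw [← Finset.mul_sum, hx1, mul_zero]
    · simp only [Pi.smul_apply, smul_eq_mul, mul_assoc]
      rw [← Finset.mul_sum, hx2, mul_zero]

/-- The linear map `φ : ℤ^m → ℤ^m`, with `(φ t)_i = ∑_{j<i} (a_j b_i - a_i b_j) t_j`. -/
def phi (m : ℕ) (a b : Fin m → ℤ) : (Fin m → ℤ) →ₗ[ℤ] (Fin m → ℤ) where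
  toFun t := fun i => ∑ j ∈ Finset.univ.filter (fun j => j < i), (a j * b i - a i * b j) * t j
  map_add' x y := by
    funext i
    simp only [Pi.add_apply, mul_add]
    exact Finset.sum_add_distrib
  map_smul' c x := by
    funext i
    simp only [Pi.smul_apply, smul_eq_mul, RingHom.id_apply]
    rw [Finset.mul_sum]
    exact Finset.sum_congr rfl fun j _ => by ring

/-- The lattice `L_i`: the span of the `e_j` for `j ∉ {i, i+1}` together with
`a_i e_i + a_{i+1} e_{i+1}` and `b_i e_i + b_{i+1} e_{i+1}` (indices mod `m`). -/
def Lmod (m : ℕ) (a b : Fin m → ℤ) (i : Fin m) : Submodule ℤ (Fin m → ℤ) :=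
  Submodule.span ℤ
    ((fun j : Fin m => (Pi.single j 1 : Fin m → ℤ)) '' {j : Fin m | j ≠ i ∧ j ≠ fsucc i} ∪
      {a i • (Pi.single i 1 : Fin m → ℤ) + a (fsucc i) • (Pi.single (fsucc i) 1 : Fin m → ℤ),
       b i • (Pi.single i 1 : Fin m → ℤ) + b (fsucc i) • (Pi.single (fsucc i) 1 : Fin m → ℤ)})


/-! ### Auxiliary machinery -/

def ext (m : ℕ) (c : Fin m → ℤ) (j : ℕ) : ℤ := if h : j < m then c ⟨j, h⟩ else 0

def PS (m : ℕ) (c t : Fin m → ℤ) (n : ℕ) : ℤ := ∑ j ∈ Finset.range n, ext m c j * ext m t j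

lemma ext_val {m : ℕ} (c : Fin m → ℤ) (j : Fin m) : ext m c j.val = c j := by
  simp [ext]

lemma ext_of_lt {m : ℕ} (c : Fin m → ℤ) {n : ℕ} (h : n < m) : ext m c n = c ⟨n, h⟩ := by
  simp [ext, h]

lemma PS_succ {m : ℕ} (c t : Fin m → ℤ) (n : ℕ) :
    PS m c t (n + 1) = PS m c t n + ext m c n * ext m t n :=
  Finset.sum_range_succ _ n

lemma PS_zero {m : ℕ} (c t : Fin m → ℤ) : PS m c t 0 = 0 := rfl

lemma PS_top {m : ℕ} (c t : Fin m → ℤ) : PS m c t m = ∑ j, t j * c j := by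
  rw [PS, ← Fin.sum_univ_eq_sum_range (fun j => ext m c j * ext m t j) m]
  exact Finset.sum_congr rfl fun j _ => by rw [ext_val, ext_val, mul_comm]

lemma sum_filter_lt {m : ℕ} (i : Fin m) (G : Fin m → ℤ) :
    ∑ j ∈ Finset.univ.filter (fun j => j < i), G j = ∑ n ∈ Finset.range i.val, ext m G n := by
  have key : ∀ F : ℕ → ℤ,
      (F = fun n => if h : n < m then (if n < i.val then G ⟨n, h⟩ else 0) else 0) →
      ∑ j ∈ Finset.univ.filter (fun j => j < i), G j = ∑ n ∈ Finset.range i.val, ext m G n := by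
    intro F hF
    calc ∑ j ∈ Finset.univ.filter (fun j => j < i), G j
        = ∑ j : Fin m, if j < i then G j else 0 := Finset.sum_filter _ _
      _ = ∑ j : Fin m, F (j.val) := Finset.sum_congr rfl (fun j _ => by
            rw [hF]; simp only [j.isLt, dif_pos]
            by_cases h : j < i
            · rw [if_pos h, if_pos (by exact h)]
            · rw [if_neg h, if_neg (by exact h)])
      _ = ∑ n ∈ Finset.range m, F n := Fin.sum_univ_eq_sum_range F m
      _ = ∑ n ∈ Finset.range i.val, F n := by
            refine (Finset.sum_subset (Finset.range_subset_range.2 (le_of_lt i.isLt)) ?_).symm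
            intro n _ hn
            have hn' : ¬ n < i.val := fun h => hn (Finset.mem_range.2 h)
            rw [hF]
            by_cases h : n < m <;> simp [h, hn']
      _ = ∑ n ∈ Finset.range i.val, ext m G n := Finset.sum_congr rfl (fun n hn => by
            have hn' : n < i.val := Finset.mem_range.1 hn
            have hnm : n < m := lt_trans hn' i.isLt
            rw [hF]; simp [ext, hnm, hn'])
  exact key _ rfl

def dd (m : ℕ) (a b : Fin m → ℤ) (i : Fin m) : ℤ := a i * b (fsucc i) - a (fsucc i) * b i
def uX (m : ℕ) (b x : Fin m → ℤ) (i : Fin m) : ℤ := b (fsucc i) * x i - b i * x (fsucc i)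
def vX (m : ℕ) (a x : Fin m → ℤ) (i : Fin m) : ℤ := a i * x (fsucc i) - a (fsucc i) * x i

lemma fsucc_ne {m : ℕ} (hm : 2 ≤ m) (i : Fin m) : fsucc i ≠ i := by
  intro h
  have h' : (i.val + 1) % m = i.val := congrArg Fin.val h
  have := i.isLt
  rcases Nat.lt_or_ge (i.val + 1) m with h1 | h1
  · rw [Nat.mod_eq_of_lt h1] at h'; omega
  · have h2 : i.val + 1 = m := by omega
    rw [h2, Nat.mod_self] at h'; omega

lemma fsucc_of_lt {m : ℕ} {n : ℕ} (h : n + 1 < m) :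
    fsucc (⟨n, by omega⟩ : Fin m) = ⟨n + 1, h⟩ := by
  apply Fin.ext
  simp [fsucc, Nat.mod_eq_of_lt h]

lemma fsucc_last {m : ℕ} (hm : 1 ≤ m) : fsucc (⟨m - 1, by omega⟩ : Fin m) = ⟨0, by omega⟩ := by
  apply Fin.ext
  simp only [fsucc]
  rw [Nat.sub_add_cancel hm, Nat.mod_self]

lemma phi_apply (m : ℕ) (a b : Fin m → ℤ) (t : Fin m → ℤ) (i : Fin m) :
    phi m a b t i = b i * PS m a t i.val - a i * PS m b t i.val := by
  have h1 : phi m a b t i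
      = ∑ j ∈ Finset.univ.filter (fun j => j < i), (a j * b i - a i * b j) * t j := rfl
  rw [h1, sum_filter_lt i (fun j => (a j * b i - a i * b j) * t j), PS, PS,
    Finset.mul_sum, Finset.mul_sum, ← Finset.sum_sub_distrib]
  refine Finset.sum_congr rfl fun n hn => ?_
  have hnm : n < m := lt_trans (Finset.mem_range.1 hn) i.isLt
  simp only [ext, dif_pos hnm]
  ring

lemma single_smul' {m : ℕ} (j : Fin m) (c : ℤ) :
    (Pi.single j c : Fin m → ℤ) = c • (Pi.single j 1 : Fin m → ℤ) := by
  funext k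
  by_cases h : k = j
  · subst h; simp
  · simp [Pi.single_eq_of_ne h]

lemma mem_Lmod_iff {m : ℕ} (hm : 3 ≤ m) (a b : Fin m → ℤ) (i : Fin m)
    (hd : dd m a b i ≠ 0) (x : Fin m → ℤ) :
    x ∈ Lmod m a b i ↔ dd m a b i ∣ uX m b x i ∧ dd m a b i ∣ vX m a x i := by
  have hne : fsucc i ≠ i := fsucc_ne (by omega) i
  constructor
  · intro hx
    refine Submodule.span_induction ?_ ?_ ?_ ?_ hx
    · rintro v (⟨j, ⟨hj1, hj2⟩, rfl⟩ | hv)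
      · constructor <;>
        · simp only [uX, vX]
          rw [Pi.single_eq_of_ne (Ne.symm hj1), Pi.single_eq_of_ne (fun h => hj2 h.symm)]
          simp
      · simp only [Set.mem_insert_iff, Set.mem_singleton_iff] at hv
        rcases hv with rfl | rfl
        · refine ⟨⟨1, ?_⟩, ⟨0, ?_⟩⟩ <;>
          · simp only [dd, uX, vX, Pi.add_apply, Pi.smul_apply, smul_eq_mul]
            rw [Pi.single_eq_same, Pi.single_eq_same, Pi.single_eq_of_ne hne,
              Pi.single_eq_of_ne (Ne.symm hne)]
            ring
        · refine ⟨⟨0, ?_⟩, ⟨1, ?_⟩⟩ <;>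
          · simp only [dd, uX, vX, Pi.add_apply, Pi.smul_apply, smul_eq_mul]
            rw [Pi.single_eq_same, Pi.single_eq_same, Pi.single_eq_of_ne hne,
              Pi.single_eq_of_ne (Ne.symm hne)]
            ring
    · constructor <;> · simp only [uX, vX]; simp
    · rintro v w _ _ ⟨h1, h2⟩ ⟨h3, h4⟩
      constructor
      · have : uX m b (v + w) i = uX m b v i + uX m b w i := by
          unfold uX; simp only [Pi.add_apply]; ring
        rw [this]; exact dvd_add h1 h3
      · have : vX m a (v + w) i = vX m a v i + vX m a w i := by
          unfold vX; simp only [Pi.add_apply]; ring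
        rw [this]; exact dvd_add h2 h4
    · rintro c v _ ⟨h1, h2⟩
      constructor
      · have : uX m b (c • v) i = c * uX m b v i := by
          unfold uX; simp only [Pi.smul_apply, smul_eq_mul]; ring
        rw [this]; exact Dvd.dvd.mul_left h1 c
      · have : vX m a (c • v) i = c * vX m a v i := by
          unfold vX; simp only [Pi.smul_apply, smul_eq_mul]; ring
        rw [this]; exact Dvd.dvd.mul_left h2 c
  · rintro ⟨⟨s, hs⟩, ⟨r, hr⟩⟩
    set va : Fin m → ℤ :=
      a i • (Pi.single i 1 : Fin m → ℤ) + a (fsucc i) • (Pi.single (fsucc i) 1 : Fin m → ℤ) with hva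
    set vb : Fin m → ℤ :=
      b i • (Pi.single i 1 : Fin m → ℤ) + b (fsucc i) • (Pi.single (fsucc i) 1 : Fin m → ℤ) with hvb
    set y : Fin m → ℤ := x - s • va - r • vb with hy
    have hvai : va i = a i := by
      simp [hva, Pi.single_eq_same, Pi.single_eq_of_ne (Ne.symm hne)]
    have hvbi : vb i = b i := by
      simp [hvb, Pi.single_eq_same, Pi.single_eq_of_ne (Ne.symm hne)]
    have hvai' : va (fsucc i) = a (fsucc i) := by
      simp [hva, Pi.single_eq_same, Pi.single_eq_of_ne hne]
    have hvbi' : vb (fsucc i) = b (fsucc i) := by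
      simp [hvb, Pi.single_eq_same, Pi.single_eq_of_ne hne]
    have hyi : y i = 0 := by
      have key : dd m a b i * (x i - s * a i - r * b i) = 0 := by
        have h1 : dd m a b i * s = uX m b x i := hs.symm
        have h2 : dd m a b i * r = vX m a x i := hr.symm
        unfold dd uX vX at *
        linear_combination (-(a i)) * h1 - b i * h2
      rcases mul_eq_zero.1 key with h | h
      · exact absurd h hd
      · simp only [hy, Pi.sub_apply, Pi.smul_apply, smul_eq_mul, hvai, hvbi]
        linarith
    have hyi' : y (fsucc i) = 0 := by
      have key : dd m a b i * (x (fsucc i) - s * a (fsucc i) - r * b (fsucc i)) = 0 := by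
        have h1 : dd m a b i * s = uX m b x i := hs.symm
        have h2 : dd m a b i * r = vX m a x i := hr.symm
        unfold dd uX vX at *
        linear_combination (-(a (fsucc i))) * h1 - b (fsucc i) * h2
      rcases mul_eq_zero.1 key with h | h
      · exact absurd h hd
      · simp only [hy, Pi.sub_apply, Pi.smul_apply, smul_eq_mul, hvai', hvbi']
        linarith
    have hyL : y ∈ Lmod m a b i := by
      have hy2 : y = ∑ j : Fin m, Pi.single j (y j) := (Finset.univ_sum_single y).symm
      rw [hy2]
      refine Submodule.sum_mem _ fun j _ => ?_
      by_cases hji : j = i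
      · subst hji; rw [hyi]; simp
      · by_cases hji' : j = fsucc i
        · subst hji'; rw [hyi']; simp
        · rw [single_smul']
          exact Submodule.smul_mem _ _ (Submodule.subset_span
            (Or.inl ⟨j, ⟨hji, hji'⟩, rfl⟩))
    have hva' : va ∈ Lmod m a b i := Submodule.subset_span (Or.inr (Set.mem_insert _ _))
    have hvb' : vb ∈ Lmod m a b i := Submodule.subset_span
      (Or.inr (Set.mem_insert_of_mem _ rfl))
    have hxy : x = y + s • va + r • vb := by rw [hy]; abel
    rw [hxy]
    exact Submodule.add_mem _ (Submodule.add_mem _ hyL (Submodule.smul_mem _ _ hva'))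
      (Submodule.smul_mem _ _ hvb')


lemma mem_Kmod {m : ℕ} (a b t : Fin m → ℤ) :
    t ∈ Kmod m a b ↔ (∑ i, t i * a i = 0 ∧ ∑ i, t i * b i = 0) := Iff.rfl

lemma exists_of_coprime {p q U V : ℤ} (h : IsCoprime p q) (hpq : p * U = q * V) :
    ∃ s, p * s = V ∧ q * s = U := by
  by_cases hq : q = 0
  · subst hq
    have hp : IsUnit p := isCoprime_zero_right.1 h
    have hU : U = 0 := by
      have : p * U = 0 := by rw [hpq]; ring
      rcases mul_eq_zero.1 this with h' | h'
      · exact absurd h' (IsUnit.ne_zero hp)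
      · exact h'
    refine ⟨p * V, ?_, by simp [hU]⟩
    rcases Int.isUnit_iff.1 hp with rfl | rfl <;> ring
  · have hdvd : q ∣ U := by
      refine h.symm.dvd_of_dvd_mul_left ?_
      exact ⟨V, hpq⟩
    obtain ⟨s, hs⟩ := hdvd
    refine ⟨s, ?_, hs.symm⟩
    have : q * (p * s) = q * V := by rw [← hpq, hs]; ring
    exact mul_left_cancel₀ hq this

lemma phi_zero_at {m : ℕ} (hm : 1 ≤ m) (a b t : Fin m → ℤ) :
    phi m a b t ⟨0, by omega⟩ = 0 := by
  rw [phi_apply]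
  simp [PS_zero]

lemma phi_last_zero {m : ℕ} (hm : 1 ≤ m) (a b t : Fin m → ℤ) (ht : t ∈ Kmod m a b) :
    phi m a b t ⟨m - 1, by omega⟩ = 0 := by
  obtain ⟨ha, hb⟩ := ht
  set i : Fin m := ⟨m - 1, by omega⟩ with hi
  have hmm : m - 1 + 1 = m := by omega
  have hPSa : PS m a t (m - 1) + a i * t i = 0 := by
    have h2 := PS_succ a t (m - 1)
    rw [hmm, PS_top, ha] at h2
    rw [show ext m a (m-1) = a i from by rw [hi]; exact ext_of_lt a (by omega),
      show ext m t (m-1) = t i from by rw [hi]; exact ext_of_lt t (by omega)] at h2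
    linarith
  have hPSb : PS m b t (m - 1) + b i * t i = 0 := by
    have h2 := PS_succ b t (m - 1)
    rw [hmm, PS_top, hb] at h2
    rw [show ext m b (m-1) = b i from by rw [hi]; exact ext_of_lt b (by omega),
      show ext m t (m-1) = t i from by rw [hi]; exact ext_of_lt t (by omega)] at h2
    linarith
  rw [phi_apply]
  have hiv : i.val = m - 1 := rfl
  rw [hiv]
  linear_combination b i * hPSa - a i * hPSb

lemma phi_mem_div {m : ℕ} (hm : 3 ≤ m) (a b t : Fin m → ℤ) (ht : t ∈ Kmod m a b) (i : Fin m) :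
    dd m a b i ∣ uX m b (phi m a b t) i ∧ dd m a b i ∣ vX m a (phi m a b t) i := by
  rcases Nat.lt_or_ge (i.val + 1) m with h1 | h1
  · have hfs : fsucc i = ⟨i.val + 1, h1⟩ := by
      apply Fin.ext
      simp [fsucc, Nat.mod_eq_of_lt h1]
    have e1 : phi m a b t i = b i * PS m a t i.val - a i * PS m b t i.val := phi_apply m a b t i
    have e2 : phi m a b t (fsucc i)
        = b (fsucc i) * PS m a t (i.val + 1) - a (fsucc i) * PS m b t (i.val + 1) := by
      conv_lhs => rw [hfs, phi_apply]
      rw [hfs]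
    have hPSa : PS m a t (i.val + 1) = PS m a t i.val + a i * t i := by
      rw [PS_succ, ext_val, ext_val]
    have hPSb : PS m b t (i.val + 1) = PS m b t i.val + b i * t i := by
      rw [PS_succ, ext_val, ext_val]
    constructor
    · refine ⟨-(PS m b t i.val + b i * t i), ?_⟩
      simp only [uX, dd]
      rw [e1, e2, hPSa, hPSb]
      ring
    · refine ⟨PS m a t i.val + a i * t i, ?_⟩
      simp only [vX, dd]
      rw [e1, e2, hPSa, hPSb]
      ring
  · have hi : i = ⟨m - 1, by omega⟩ := Fin.ext (by have := i.isLt; simp; omega)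
    have hfs : fsucc i = ⟨0, by omega⟩ := by
      apply Fin.ext
      have hieq : i.val + 1 = m := by have := i.isLt; omega
      simp only [fsucc]
      rw [hieq, Nat.mod_self]
    have hz1 : phi m a b t i = 0 := by rw [hi]; exact phi_last_zero (by omega) a b t ht
    have hz2 : phi m a b t (fsucc i) = 0 := by rw [hfs]; exact phi_zero_at (by omega) a b t
    constructor
    · refine ⟨0, ?_⟩
      simp only [uX]
      rw [hz1, hz2]; ring
    · refine ⟨0, ?_⟩
      simp only [vX]
      rw [hz1, hz2]; ring

lemma phi_inj {m : ℕ} (hm : 3 ≤ m) (a b : Fin m → ℤ)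
    (hprim : ∀ i, Int.gcd (a i) (b i) = 1)
    (hdet : ∀ i : Fin m, a i * b (fsucc i) - a (fsucc i) * b i ≠ 0)
    (t : Fin m → ℤ) (ht : t ∈ Kmod m a b) (h0 : phi m a b t = 0) : t = 0 := by
  obtain ⟨hKa, hKb⟩ := ht
  have H : ∀ n, ∀ hn : n < m - 1, t ⟨n, by omega⟩ = 0 := by
    intro n
    induction n using Nat.strong_induction_on with
    | _ n ih =>
      intro hn
      have hPSa : PS m a t n = 0 := by
        refine Finset.sum_eq_zero fun j hj => ?_
        have hjn : j < n := Finset.mem_range.1 hj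
        have hjm : j < m := by omega
        rw [ext_of_lt t hjm, ih j hjn (by omega)]
        ring
      have hPSb : PS m b t n = 0 := by
        refine Finset.sum_eq_zero fun j hj => ?_
        have hjn : j < n := Finset.mem_range.1 hj
        have hjm : j < m := by omega
        rw [ext_of_lt t hjm, ih j hjn (by omega)]
        ring
      have hn1 : n + 1 < m := by omega
      have hnm : n < m := by omega
      have hphi : phi m a b t ⟨n + 1, hn1⟩ = 0 := by rw [h0]; rfl
      rw [phi_apply] at hphi
      have hv : (⟨n + 1, hn1⟩ : Fin m).val = n + 1 := rfl
      rw [hv, PS_succ, PS_succ, hPSa, hPSb, ext_of_lt a hnm, ext_of_lt b hnm,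
        ext_of_lt t hnm] at hphi
      have hd := hdet ⟨n, hnm⟩
      rw [fsucc_of_lt hn1] at hd
      have key : (a ⟨n, hnm⟩ * b ⟨n+1, hn1⟩ - a ⟨n+1, hn1⟩ * b ⟨n, hnm⟩) * t ⟨n, hnm⟩ = 0 := by
        linear_combination hphi
      rcases mul_eq_zero.1 key with h | h
      · exact absurd h hd
      · exact h
  have hlast : t ⟨m - 1, by omega⟩ = 0 := by
    set i : Fin m := ⟨m - 1, by omega⟩ with hi
    have hmm : m - 1 + 1 = m := by omega
    have hPS : PS m a t (m - 1) = 0 := by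
      refine Finset.sum_eq_zero fun j hj => ?_
      have hjn : j < m - 1 := Finset.mem_range.1 hj
      rw [ext_of_lt t (by omega), H j hjn]
      ring
    have hPSb : PS m b t (m - 1) = 0 := by
      refine Finset.sum_eq_zero fun j hj => ?_
      have hjn : j < m - 1 := Finset.mem_range.1 hj
      rw [ext_of_lt t (by omega), H j hjn]
      ring
    have ha : a i * t i = 0 := by
      have h2 := PS_succ a t (m - 1)
      rw [hmm, PS_top, hKa, hPS, ext_of_lt a (by omega : m - 1 < m),
        ext_of_lt t (by omega : m - 1 < m)] at h2
      linarith [h2]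
    have hb : b i * t i = 0 := by
      have h2 := PS_succ b t (m - 1)
      rw [hmm, PS_top, hKb, hPSb, ext_of_lt b (by omega : m - 1 < m),
        ext_of_lt t (by omega : m - 1 < m)] at h2
      linarith [h2]
    by_contra hne
    have ha0 : a i = 0 := by
      rcases mul_eq_zero.1 ha with h | h
      · exact h
      · exact absurd h hne
    have hb0 : b i = 0 := by
      rcases mul_eq_zero.1 hb with h | h
      · exact h
      · exact absurd h hne
    have := hprim i
    rw [ha0, hb0] at this
    simp at this
  funext j
  rcases Nat.lt_or_ge j.val (m - 1) with h | h
  · have := H j.val h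
    have hj : j = ⟨j.val, j.isLt⟩ := rfl
    rw [hj]
    exact this
  · have hjv : j = ⟨m - 1, by omega⟩ := Fin.ext (by have := j.isLt; simp; omega)
    rw [hjv]
    exact hlast


lemma indep_core {m : ℕ} (hm : 3 ≤ m) (a b : Fin m → ℤ)
    (hprim : ∀ i, Int.gcd (a i) (b i) = 1)
    (hdet : ∀ i : Fin m, a i * b (fsucc i) - a (fsucc i) * b i ≠ 0)
    (α β : ℤ) (t : Fin m → ℤ) (ht : t ∈ Kmod m a b)
    (h : α • a + β • b + phi m a b t = 0) : α = 0 ∧ β = 0 ∧ t = 0 := by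
  have h0 : ∀ i : Fin m, α * a i + β * b i + phi m a b t i = 0 := by
    intro i
    have := congrFun h i
    simpa [Pi.add_apply, Pi.smul_apply, smul_eq_mul] using this
  have e1 : α * a ⟨0, by omega⟩ + β * b ⟨0, by omega⟩ = 0 := by
    have := h0 ⟨0, by omega⟩
    rw [phi_zero_at (by omega)] at this
    linarith
  have e2 : α * a ⟨m - 1, by omega⟩ + β * b ⟨m - 1, by omega⟩ = 0 := by
    have := h0 ⟨m - 1, by omega⟩
    rw [phi_last_zero (by omega) a b t ht] at this
    linarith
  set L : Fin m := ⟨m - 1, by omega⟩ with hL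
  have hdL := hdet L
  rw [fsucc_last (by omega : 1 ≤ m)] at hdL
  have hα : α = 0 := by
    have key : α * (a L * b ⟨0, by omega⟩ - a ⟨0, by omega⟩ * b L) = 0 := by
      linear_combination b ⟨0, by omega⟩ * e2 - b L * e1
    rcases mul_eq_zero.1 key with h' | h'
    · exact h'
    · exact absurd h' hdL
  have hβ : β = 0 := by
    have key : β * (a L * b ⟨0, by omega⟩ - a ⟨0, by omega⟩ * b L) = 0 := by
      linear_combination a L * e1 - a ⟨0, by omega⟩ * e2
    rcases mul_eq_zero.1 key with h' | h'
    · exact h'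
    · exact absurd h' hdL
  refine ⟨hα, hβ, ?_⟩
  apply phi_inj hm a b hprim hdet t ht
  funext i
  have := h0 i
  rw [hα, hβ] at this
  simpa using this

lemma sum_split {m : ℕ} (hm : 3 ≤ m) {M : Type*} [AddCommMonoid M] (f : Fin m → M) :
    ∑ i, f i = f ⟨0, by have := hm; omega⟩ + f ⟨1, by have := hm; omega⟩ +
      ∑ j : Fin (m - 2), f ⟨j.val + 2, Nat.add_lt_of_lt_sub j.isLt⟩ := by
  have h2 : 2 + (m - 2) = m := by omega
  rw [← Equiv.sum_comp (finCongr h2) f, Fin.sum_univ_add, Fin.sum_univ_two]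
  have e0 : (finCongr h2) (Fin.castAdd (m - 2) 0) = (⟨0, by omega⟩ : Fin m) :=
    Fin.ext (by simp)
  have e1 : (finCongr h2) (Fin.castAdd (m - 2) 1) = (⟨1, by omega⟩ : Fin m) :=
    Fin.ext (by simp)
  rw [e0, e1]
  congr 1
  refine Finset.sum_congr rfl fun j _ => congrArg f (Fin.ext ?_)
  simp only [finCongr_apply, Fin.coe_cast, Fin.coe_natAdd]
  omega

set_option maxHeartbeats 1000000 in
lemma span_rep {m : ℕ} (hm : 3 ≤ m) (a b : Fin m → ℤ)
    (hprim : ∀ i, Int.gcd (a i) (b i) = 1)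
    (hdet : ∀ i : Fin m, dd m a b i ≠ 0)
    (x : Fin m → ℤ)
    (hx : ∀ i, dd m a b i ∣ uX m b x i ∧ dd m a b i ∣ vX m a x i) :
    ∃ (α β : ℤ) (t : Fin m → ℤ), t ∈ Kmod m a b ∧ x = α • a + β • b + phi m a b t := by
  set u : Fin m → ℤ := fun i => uX m b x i / dd m a b i with hu0
  set v : Fin m → ℤ := fun i => vX m a x i / dd m a b i with hv0
  have hu : ∀ i, dd m a b i * u i = uX m b x i := fun i => Int.mul_ediv_cancel' (hx i).1
  have hv : ∀ i, dd m a b i * v i = vX m a x i := fun i => Int.mul_ediv_cancel' (hx i).2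
  have id1 : ∀ i, a i * u i + b i * v i = x i := by
    intro i
    apply mul_left_cancel₀ (hdet i)
    have h1 := hu i
    have h2 := hv i
    simp only [dd, uX, vX] at h1 h2 ⊢
    linear_combination a i * h1 + b i * h2
  have id2 : ∀ i, a (fsucc i) * u i + b (fsucc i) * v i = x (fsucc i) := by
    intro i
    apply mul_left_cancel₀ (hdet i)
    have h1 := hu i
    have h2 := hv i
    simp only [dd, uX, vX] at h1 h2 ⊢
    linear_combination a (fsucc i) * h1 + b (fsucc i) * h2
  set p : Fin m → Fin m := fun j =>
    if j.val = 0 then ⟨m - 1, by omega⟩ else ⟨j.val - 1, by have := j.isLt; omega⟩ with hp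
  have hfp : ∀ j, fsucc (p j) = j := by
    intro j
    apply Fin.ext
    by_cases h : j.val = 0
    · simp only [hp, if_pos h, fsucc]
      rw [Nat.sub_add_cancel (by omega), Nat.mod_self]
      omega
    · simp only [hp, if_neg h, fsucc]
      rw [Nat.sub_add_cancel (by omega : 1 ≤ j.val), Nat.mod_eq_of_lt j.isLt]
  have hbij : Function.Bijective p :=
    Finite.injective_iff_bijective.1 (fun x y h => by rw [← hfp x, ← hfp y, h])
  have compat : ∀ j, a j * (u (p j) - u j) = b j * (v j - v (p j)) := by
    intro j
    have h1 : a j * u (p j) + b j * v (p j) = x j := by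
      have h2 := id2 (p j)
      rwa [hfp j] at h2
    have h2 := id1 j
    linear_combination h1 - h2
  have hex : ∀ j, ∃ s, a j * s = v j - v (p j) ∧ b j * s = u (p j) - u j := fun j =>
    exists_of_coprime (Int.isCoprime_iff_gcd_eq_one.2 (hprim j)) (compat j)
  choose t hta htb using hex
  have htK : t ∈ Kmod m a b := by
    rw [mem_Kmod]
    constructor
    · calc ∑ j, t j * a j = ∑ j, (v j - v (p j)) :=
            Finset.sum_congr rfl fun j _ => by rw [mul_comm]; exact hta j
        _ = ∑ j, v j - ∑ j, v (p j) := Finset.sum_sub_distrib _ _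
        _ = 0 := by rw [hbij.sum_comp v]; ring
    · calc ∑ j, t j * b j = ∑ j, (u (p j) - u j) :=
            Finset.sum_congr rfl fun j _ => by rw [mul_comm]; exact htb j
        _ = ∑ j, u (p j) - ∑ j, u j := Finset.sum_sub_distrib _ _
        _ = 0 := by rw [hbij.sum_comp u]; ring
  set lst : Fin m := ⟨m - 1, by omega⟩ with hlst
  have hp0 : p ⟨0, by omega⟩ = lst := by
    simp only [hp]
    simp
  have hpsucc : ∀ n (h : n + 1 < m), p ⟨n + 1, h⟩ = ⟨n, Nat.lt_of_succ_lt h⟩ := by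
    intro n h
    simp only [hp]
    simp
  have PSa : ∀ n (hn : n < m), PS m a t (n + 1) = v ⟨n, hn⟩ - v lst := by
    intro n
    induction n with
    | zero =>
      intro hn
      rw [PS_succ, PS_zero, ext_of_lt a hn, ext_of_lt t hn, zero_add]
      have h1 := hta ⟨0, hn⟩
      rw [hp0] at h1
      exact h1
    | succ n ih =>
      intro hn
      have hnm : n < m := Nat.lt_of_succ_lt hn
      rw [PS_succ, ih hnm, ext_of_lt a hn, ext_of_lt t hn]
      have h1 := hta ⟨n + 1, hn⟩
      rw [hpsucc n hn] at h1
      linarith [h1]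
  have PSb : ∀ n (hn : n < m), PS m b t (n + 1) = u lst - u ⟨n, hn⟩ := by
    intro n
    induction n with
    | zero =>
      intro hn
      rw [PS_succ, PS_zero, ext_of_lt b hn, ext_of_lt t hn, zero_add]
      have h1 := htb ⟨0, hn⟩
      rw [hp0] at h1
      linarith [h1]
    | succ n ih =>
      intro hn
      have hnm : n < m := Nat.lt_of_succ_lt hn
      rw [PS_succ, ih hnm, ext_of_lt b hn, ext_of_lt t hn]
      have h1 := htb ⟨n + 1, hn⟩
      rw [hpsucc n hn] at h1
      linarith [h1]
  refine ⟨u lst, v lst, t, htK, ?_⟩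
  funext i
  have lhsval : (u lst • a + v lst • b + phi m a b t) i
      = u lst * a i + v lst * b i + phi m a b t i := by
    simp [Pi.add_apply, Pi.smul_apply, smul_eq_mul]
  rw [lhsval, phi_apply]
  by_cases h : i.val = 0
  · have hi : i = ⟨0, by omega⟩ := Fin.ext h
    rw [hi]
    have key := id2 lst
    rw [hlst, fsucc_last (by omega : 1 ≤ m)] at key
    rw [show PS m a t ((⟨0, by omega⟩ : Fin m) : ℕ) = 0 from PS_zero a t,
      show PS m b t ((⟨0, by omega⟩ : Fin m) : ℕ) = 0 from PS_zero b t]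
    rw [hlst]
    linear_combination -key
  · have hn1 : (i.val - 1) + 1 < m := by have := i.isLt; omega
    have hi : i = ⟨(i.val - 1) + 1, hn1⟩ := Fin.ext (by simp; omega)
    rw [hi]
    have hval : ((⟨(i.val - 1) + 1, hn1⟩ : Fin m) : ℕ) = (i.val - 1) + 1 := rfl
    rw [hval, PSa _ (Nat.lt_of_succ_lt hn1), PSb _ (Nat.lt_of_succ_lt hn1)]
    have key := id2 ⟨i.val - 1, Nat.lt_of_succ_lt hn1⟩
    rw [fsucc_of_lt hn1] at key
    linear_combination -key


set_option maxHeartbeats 1000000 in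
/-- If `κ_1, …, κ_{m-2}` is a `ℤ`-basis of `K`, then
`a, b, φ(κ_1), …, φ(κ_{m-2})` form a `ℤ`-basis of `L_1 ∩ ⋯ ∩ L_m`. -/
theorem stmt1 (m : ℕ) (hm : 3 ≤ m) (a b : Fin m → ℤ)
    (hprim : ∀ i, Int.gcd (a i) (b i) = 1)
    (hdet : ∀ i : Fin m, a i * b (fsucc i) - a (fsucc i) * b i ≠ 0)
    (κ : Module.Basis (Fin (m - 2)) ℤ ↥(Kmod m a b)) :
    ∃ B : Module.Basis (Fin m) ℤ ↥(⨅ i, Lmod m a b i),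
      ((B ⟨0, by omega⟩ : Fin m → ℤ) = a) ∧
      ((B ⟨1, by omega⟩ : Fin m → ℤ) = b) ∧
      ∀ j : Fin (m - 2),
        (B ⟨(j : ℕ) + 2, by have := j.isLt; omega⟩ : Fin m → ℤ) =
          phi m a b (κ j : Fin m → ℤ) := by
  have hd : ∀ i, dd m a b i ≠ 0 := fun i => hdet i
  have hmem_iff : ∀ x : Fin m → ℤ, x ∈ (⨅ i, Lmod m a b i) ↔
      ∀ i, dd m a b i ∣ uX m b x i ∧ dd m a b i ∣ vX m a x i := by
    intro x
    rw [Submodule.mem_iInf]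
    exact forall_congr' fun i => mem_Lmod_iff hm a b i (hd i) x
  set w : Fin m → Fin m → ℤ := fun i =>
    if h0 : i.val = 0 then a else if h1 : i.val = 1 then b
    else phi m a b (κ ⟨i.val - 2, by have := i.isLt; omega⟩) with hwdef
  have hw0 : w ⟨0, by omega⟩ = a := by simp [hwdef]
  have hw1 : w ⟨1, by omega⟩ = b := by simp [hwdef]
  have hw2 : ∀ j : Fin (m - 2),
      w ⟨j.val + 2, by have := j.isLt; omega⟩ = phi m a b (κ j : Fin m → ℤ) := by
    intro j
    simp only [hwdef]
    rw [dif_neg (by simp), dif_neg (by simp)]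
    have hj : (⟨(⟨j.val + 2, by have := j.isLt; omega⟩ : Fin m).val - 2,
        by have := j.isLt; omega⟩ : Fin (m - 2)) = j := Fin.ext (Nat.add_sub_cancel _ _)
    rw [hj]
  have hwL : ∀ i, w i ∈ ⨅ i, Lmod m a b i := by
    intro i
    rw [hmem_iff]
    intro k
    by_cases h0 : i.val = 0
    · have hwi : w i = a := by simp [hwdef, h0]
      rw [hwi]
      exact ⟨⟨1, by simp only [uX, dd]; ring⟩, ⟨0, by simp only [vX]; ring⟩⟩
    · by_cases h1 : i.val = 1
      · have hwi : w i = b := by simp [hwdef, h0, h1]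
        rw [hwi]
        exact ⟨⟨0, by simp only [uX]; ring⟩, ⟨1, by simp only [vX, dd]; ring⟩⟩
      · have hwi : w i = phi m a b (κ ⟨i.val - 2, by have := i.isLt; omega⟩ : Fin m → ℤ) := by
          simp [hwdef, h0, h1]
        rw [hwi]
        exact phi_mem_div hm a b _ (SetLike.coe_mem _) k
  have hli : LinearIndependent ℤ w := by
    rw [Fintype.linearIndependent_iff]
    intro g hg
    rw [sum_split hm (fun i => g i • w i)] at hg
    set tt : Fin m → ℤ :=
      ∑ j : Fin (m - 2), g ⟨j.val + 2, by have := j.isLt; omega⟩ • (κ j : Fin m → ℤ) with htt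
    have httK : tt ∈ Kmod m a b :=
      Submodule.sum_mem _ fun j _ => Submodule.smul_mem _ _ (SetLike.coe_mem (κ j))
    have hg' : g ⟨0, by omega⟩ • a + g ⟨1, by omega⟩ • b + phi m a b tt = 0 := by
      have hphit : phi m a b tt
          = ∑ j : Fin (m - 2), g ⟨j.val + 2, by have := j.isLt; omega⟩ • phi m a b (κ j : Fin m → ℤ) := by
        rw [htt, map_sum]
        exact Finset.sum_congr rfl fun j _ => by rw [map_smul]
      rw [hphit]
      rw [show (∑ j : Fin (m - 2), g ⟨j.val + 2, by have := j.isLt; omega⟩ • phi m a b (κ j : Fin m → ℤ))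
          = ∑ j : Fin (m - 2), g ⟨j.val + 2, by have := j.isLt; omega⟩ • w ⟨j.val + 2, by have := j.isLt; omega⟩ from
        Finset.sum_congr rfl fun j _ => by rw [hw2 j]]
      rw [hw0, hw1] at hg
      exact hg
    obtain ⟨hα, hβ, htt0⟩ := indep_core hm a b hprim hdet _ _ tt httK hg'
    have hcoef : ∀ j : Fin (m - 2), g ⟨j.val + 2, by have := j.isLt; omega⟩ = 0 := by
      have hzero : (∑ j : Fin (m - 2), g ⟨j.val + 2, by have := j.isLt; omega⟩ • κ j) = 0 := by
        apply Subtype.ext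
        have hcast : ((∑ j : Fin (m - 2), g ⟨j.val + 2, by have := j.isLt; omega⟩ • κ j :
            ↥(Kmod m a b)) : Fin m → ℤ) = tt := by
          rw [htt]
          simp
        exact hcast.trans htt0
      exact fun j => Fintype.linearIndependent_iff.1 κ.linearIndependent _ hzero j
    intro i
    by_cases h0 : i.val = 0
    · have hi : i = ⟨0, by omega⟩ := Fin.ext h0
      rw [hi]; exact hα
    · by_cases h1 : i.val = 1
      · have hi : i = ⟨1, by omega⟩ := Fin.ext h1
        rw [hi]; exact hβ
      · have hi : i = ⟨((⟨i.val - 2, by have := i.isLt; omega⟩ : Fin (m - 2))).val + 2,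
            by have := i.isLt; omega⟩ := Fin.ext (by simp; omega)
        rw [hi]; exact hcoef _
  have hspan : ∀ x ∈ (⨅ i, Lmod m a b i), x ∈ Submodule.span ℤ (Set.range w) := by
    intro x hx
    obtain ⟨α, β, t, htK, rfl⟩ := span_rep hm a b hprim hd x ((hmem_iff x).1 hx)
    have hphi_t : phi m a b t ∈ Submodule.span ℤ (Set.range w) := by
      have hrep : t = ∑ j : Fin (m - 2), (κ.repr ⟨t, htK⟩) j • (κ j : Fin m → ℤ) := by
        have h1 := κ.sum_repr ⟨t, htK⟩
        have h2 := congrArg (Subtype.val) h1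
        simp only [AddSubmonoidClass.coe_finset_sum, SetLike.val_smul] at h2
        exact h2.symm
      rw [hrep, map_sum]
      refine Submodule.sum_mem _ fun j _ => ?_
      rw [map_smul]
      refine Submodule.smul_mem _ _ (Submodule.subset_span ?_)
      exact ⟨⟨j.val + 2, by have := j.isLt; omega⟩, hw2 j⟩
    refine Submodule.add_mem _ (Submodule.add_mem _ ?_ ?_) hphi_t
    · exact Submodule.smul_mem _ _ (Submodule.subset_span ⟨⟨0, by omega⟩, hw0⟩)
    · exact Submodule.smul_mem _ _ (Submodule.subset_span ⟨⟨1, by omega⟩, hw1⟩)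
  set v : Fin m → ↥(⨅ i, Lmod m a b i) := fun i => ⟨w i, hwL i⟩ with hvdef
  have hliv : LinearIndependent ℤ v :=
    LinearIndependent.of_comp (Submodule.subtype _) hli
  have htop : ⊤ ≤ Submodule.span ℤ (Set.range v) := by
    intro z _
    have hz : (z : Fin m → ℤ) ∈ Submodule.span ℤ (Set.range w) := hspan _ z.2
    have himg : (Submodule.subtype (⨅ i, Lmod m a b i)) '' Set.range v = Set.range w := by
      rw [← Set.range_comp]
      rfl
    rw [show Submodule.span ℤ (Set.range w)
        = Submodule.map (Submodule.subtype (⨅ i, Lmod m a b i))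
          (Submodule.span ℤ (Set.range v)) from by rw [Submodule.map_span, himg]] at hz
    obtain ⟨y, hy, hyz⟩ := hz
    have hyz' : y = z := Subtype.ext hyz
    rwa [← hyz']
  refine ⟨Module.Basis.mk hliv htop, ?_, ?_, ?_⟩
  · rw [Module.Basis.mk_apply]
    exact hw0
  · rw [Module.Basis.mk_apply]
    exact hw1
  · intro j
    rw [Module.Basis.mk_apply]
    exact hw2 j


end ToricStmt
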